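/- arXiv:2210.08698 — 2 statements merged into one kernel-verified Lean document; each statement's English description precedes it below -/
import Mathlib

section
/- Suppose each linear functional Lᵢ satisfies positivity, i.e., there is C < ∞ with |Lᵢ(u)| ≤ C‖u‖₂ for all u ∈ Mᵢ and all i. Then there exists an unbiased estimator of the aggregate treatment effect; concretely, there exist measurable functions γ₁, …, γₙ : Ω → ℝ with ∫ γᵢ² dμ < ∞ such that the estimator T(ω, y) = (1/n) Σᵢ γᵢ(ω) yᵢ satisfies: for every (f₁, …, fₙ) ∈ M₁ × ⋯ × Mₙ, the function ω ↦ (1/n) Σᵢ γᵢ(ω) fᵢ(ω) is μ-integrable and ∫ (1/n) Σᵢ γᵢ(ω) fᵢ(ω) dμ(ω) = (1/n) Σᵢ Lᵢ(fᵢ). -/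
open MeasureTheory

lemma riesz_aux {Ω : Type*} [MeasurableSpace Ω] (μ : Measure Ω) [IsProbabilityMeasure μ]
    (M : Submodule ℝ (Ω → ℝ))
    (hmeas : ∀ f ∈ M, Measurable f)
    (hsq : ∀ f ∈ M, Integrable (fun ω => (f ω) ^ 2) μ)
    (L : M →ₗ[ℝ] ℝ) (C : ℝ)
    (hC : ∀ u : M, |L u| ≤ C * Real.sqrt (∫ ω, ((u : Ω → ℝ) ω) ^ 2 ∂μ)) :
    ∃ γ : Ω → ℝ, Measurable γ ∧ Integrable (fun ω => (γ ω) ^ 2) μ ∧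
      ∀ u : M, Integrable (fun ω => γ ω * ((u : Ω → ℝ) ω)) μ ∧
        ∫ ω, γ ω * ((u : Ω → ℝ) ω) ∂μ = L u := by
  classical
  have hmem : ∀ u : M, MemLp (u : Ω → ℝ) 2 μ := fun u =>
    (memLp_two_iff_integrable_sq ((hmeas u u.2).aestronglyMeasurable)).mpr (hsq u u.2)
  -- the linear map into L²
  let T : M →ₗ[ℝ] Lp ℝ 2 μ :=
    { toFun := fun u => (hmem u).toLp (u : Ω → ℝ)
      map_add' := fun u v => (MemLp.toLp_add (hmem u) (hmem v)).symm ▸ rfl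
      map_smul' := fun c u => by
        simp only [RingHom.id_apply]
        exact (MemLp.toLp_const_smul c (hmem u)).symm }
  have hT_ae : ∀ u : M, (T u : Ω → ℝ) =ᵐ[μ] (u : Ω → ℝ) := fun u => (hmem u).coeFn_toLp
  -- key : L is well-defined on fibers of T
  have key : ∀ a b : M, T a = T b → L a = L b := by
    intro a b hab
    have hae : (a : Ω → ℝ) =ᵐ[μ] (b : Ω → ℝ) :=
      (MemLp.toLp_eq_toLp_iff (hmem a) (hmem b)).mp hab
    have hz : ((a - b : M) : Ω → ℝ) =ᵐ[μ] (fun _ => (0 : ℝ)) := by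
      filter_upwards [hae] with ω hω
      simp [hω]
    have hz2 : (fun ω => (((a - b : M) : Ω → ℝ) ω) ^ 2) =ᵐ[μ] (fun _ => (0 : ℝ)) := by
      filter_upwards [hz] with ω hω
      simp [hω]
    have hint : ∫ ω, (((a - b : M) : Ω → ℝ) ω) ^ 2 ∂μ = 0 := by
      rw [integral_congr_ae hz2, integral_zero]
    have := hC (a - b)
    rw [hint, Real.sqrt_zero, mul_zero, map_sub] at this
    have := abs_nonpos_iff.mp (le_of_le_of_eq this rfl)
    linarith [sub_eq_zero.mp this]
  -- norm of T u
  have hnormT : ∀ u : M, ‖T u‖ = Real.sqrt (∫ ω, ((u : Ω → ℝ) ω) ^ 2 ∂μ) := by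
    intro u
    have h1 : (‖T u‖ : ℝ) ^ 2 = @inner ℝ _ _ (T u) (T u) :=
      (real_inner_self_eq_norm_sq (T u)).symm
    have h2 : @inner ℝ _ _ (T u) (T u) = ∫ ω, (T u : Ω → ℝ) ω * (T u : Ω → ℝ) ω ∂μ := by
      rw [L2.inner_def]; rfl
    have h3 : ∫ ω, (T u : Ω → ℝ) ω * (T u : Ω → ℝ) ω ∂μ = ∫ ω, ((u : Ω → ℝ) ω) ^ 2 ∂μ := by
      refine integral_congr_ae ?_
      filter_upwards [hT_ae u] with ω hω
      rw [hω]; ring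
    rw [show Real.sqrt (∫ ω, ((u : Ω → ℝ) ω) ^ 2 ∂μ) = Real.sqrt (‖T u‖ ^ 2) by
      rw [h1, h2, h3]]
    rw [Real.sqrt_sq (norm_nonneg _)]
  -- the functional on the range of T
  set S : Submodule ℝ (Lp ℝ 2 μ) := LinearMap.range T with hS
  have pick_ex : ∀ x : S, ∃ u : M, T u = (x : Lp ℝ 2 μ) := fun x => x.2
  let pick : S → M := fun x => (pick_ex x).choose
  have hpick : ∀ x : S, T (pick x) = (x : Lp ℝ 2 μ) := fun x => (pick_ex x).choose_spec
  let ℓ₀ : S →ₗ[ℝ] ℝ :=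
    { toFun := fun x => L (pick x)
      map_add' := by
        intro x y
        have h1 : T (pick (x + y)) = T (pick x + pick y) := by
          rw [map_add, hpick, hpick, hpick]; rfl
        show L (pick (x + y)) = L (pick x) + L (pick y)
        rw [key _ _ h1, map_add]
      map_smul' := by
        intro c x
        have h1 : T (pick (c • x)) = T (c • pick x) := by
          rw [T.map_smul, hpick, hpick]; rfl
        show L (pick (c • x)) = (RingHom.id ℝ) c • L (pick x)
        rw [key _ _ h1, L.map_smul]; rfl }
  have hbound : ∀ x : S, ‖ℓ₀ x‖ ≤ |C| * ‖x‖ := by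
    intro x
    have h2 : ‖(x : Lp ℝ 2 μ)‖ = Real.sqrt (∫ ω, ((pick x : Ω → ℝ) ω) ^ 2 ∂μ) := by
      rw [← hpick x, hnormT]
    have h3 : ‖ℓ₀ x‖ = |L (pick x)| := rfl
    rw [h3]
    show |L (pick x)| ≤ |C| * ‖(x : Lp ℝ 2 μ)‖
    rw [h2]
    calc |L (pick x)| ≤ C * Real.sqrt (∫ ω, ((pick x : Ω → ℝ) ω) ^ 2 ∂μ) := hC (pick x)
      _ ≤ |C| * Real.sqrt (∫ ω, ((pick x : Ω → ℝ) ω) ^ 2 ∂μ) :=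
          mul_le_mul_of_nonneg_right (le_abs_self C) (Real.sqrt_nonneg _)
  let ℓ : S →L[ℝ] ℝ := ℓ₀.mkContinuous |C| hbound
  obtain ⟨g, hg_ext, -⟩ := exists_extension_norm_eq S ℓ
  set h : Lp ℝ 2 μ := (InnerProductSpace.toDual ℝ (Lp ℝ 2 μ)).symm g with hh
  have hinner : ∀ x : Lp ℝ 2 μ, @inner ℝ _ _ h x = g x := fun x =>
    InnerProductSpace.toDual_symm_apply
  -- representation: inner h (T u) = L u
  have hrep : ∀ u : M, @inner ℝ _ _ h (T u) = L u := by
    intro u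
    have hmemx : T u ∈ S := ⟨u, rfl⟩
    have : g (T u) = ℓ ⟨T u, hmemx⟩ := hg_ext ⟨T u, hmemx⟩
    rw [hinner, this]
    exact key _ u (hpick ⟨T u, hmemx⟩)
  -- measurable representative
  set γ : Ω → ℝ := (Lp.aestronglyMeasurable h).mk (h : Ω → ℝ) with hγ
  have hγ_meas : Measurable γ :=
    (Lp.aestronglyMeasurable h).stronglyMeasurable_mk.measurable
  have hγ_ae : (h : Ω → ℝ) =ᵐ[μ] γ := (Lp.aestronglyMeasurable h).ae_eq_mk
  have hγ_mem : MemLp γ 2 μ := (Lp.memLp h).ae_eq hγ_ae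
  refine ⟨γ, hγ_meas, (memLp_two_iff_integrable_sq hγ_meas.aestronglyMeasurable).mp hγ_mem,
    fun u => ?_⟩
  have hae2 : (fun ω => (h : Ω → ℝ) ω * (T u : Ω → ℝ) ω) =ᵐ[μ]
      (fun ω => γ ω * ((u : Ω → ℝ) ω)) := by
    filter_upwards [hγ_ae, hT_ae u] with ω h1 h2
    rw [h1, h2]
  have hint : Integrable (fun ω => (h : Ω → ℝ) ω * (T u : Ω → ℝ) ω) μ := by
    have := L2.integrable_inner (𝕜 := ℝ) h (T u)
    simpa [RCLike.inner_apply, mul_comm] using this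
  refine ⟨hint.congr hae2, ?_⟩
  have : ∫ ω, γ ω * ((u : Ω → ℝ) ω) ∂μ = @inner ℝ _ _ h (T u) := by
    rw [L2.inner_def]
    refine integral_congr_ae ?_
    filter_upwards [hae2] with ω hω
    rw [← hω]; simp [RCLike.inner_apply, mul_comm]
  rw [this, hrep]

/-- If each effect functional `L i` on model space `M i` satisfies positivity
(bounded by a constant times the L² seminorm induced by the design `μ`), then there
exists an unbiased estimator of the aggregate treatment effect of the form
`T (ω, y) = (1/n) ∑ i, γ i ω * y i`. -/
theorem positivity_implies_exists_unbiased_estimator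
    {Ω : Type*} [MeasurableSpace Ω] (μ : Measure Ω) [IsProbabilityMeasure μ]
    (n : ℕ) (M : Fin n → Submodule ℝ (Ω → ℝ))
    (hMmeas : ∀ i, ∀ f ∈ M i, Measurable f)
    (hMsq : ∀ i, ∀ f ∈ M i, Integrable (fun ω => (f ω) ^ 2) μ)
    (L : ∀ i, (M i) →ₗ[ℝ] ℝ)
    (hpos : ∃ C : ℝ, ∀ i, ∀ u : M i,
      |L i u| ≤ C * Real.sqrt (∫ ω, ((u : Ω → ℝ) ω) ^ 2 ∂μ)) :
    ∃ γ : Fin n → Ω → ℝ,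
      (∀ i, Measurable (γ i)) ∧
      (∀ i, Integrable (fun ω => (γ i ω) ^ 2) μ) ∧
      ∀ f : (i : Fin n) → M i,
        Integrable (fun ω => (1 / (n : ℝ)) * ∑ i, γ i ω * ((f i : Ω → ℝ) ω)) μ ∧
        ∫ ω, (1 / (n : ℝ)) * ∑ i, γ i ω * ((f i : Ω → ℝ) ω) ∂μ
          = (1 / (n : ℝ)) * ∑ i, L i (f i) := by
  obtain ⟨C, hC⟩ := hpos
  choose γ hγmeas hγsq hγrep using fun i =>
    riesz_aux μ (M i) (hMmeas i) (hMsq i) (L i) C (hC i)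
  refine ⟨γ, hγmeas, hγsq, fun f => ?_⟩
  have hint : ∀ i, Integrable (fun ω => γ i ω * ((f i : Ω → ℝ) ω)) μ :=
    fun i => (hγrep i (f i)).1
  have hsum : Integrable (fun ω => ∑ i, γ i ω * ((f i : Ω → ℝ) ω)) μ :=
    integrable_finset_sum _ fun i _ => hint i
  refine ⟨hsum.const_mul _, ?_⟩
  rw [integral_const_mul, integral_finset_sum _ fun i _ => hint i]
  congr 1
  exact Finset.sum_congr rfl fun i _ => (hγrep i (f i)).2
end

section
/- Suppose there exists an unbiased estimator T : Ω × ℝⁿ → ℝ of the aggregate treatment effect, i.e., for every (f₁, …, fₙ) ∈ M₁ × ⋯ × Mₙ the function ω ↦ T(ω, (f₁(ω), …, fₙ(ω))) is μ-integrable with integral (1/n) Σᵢ Lᵢ(fᵢ). Then each Lᵢ satisfies simple positivity: for every i and every u ∈ Mᵢ with u = 0 μ-almost everywhere, Lᵢ(u) = 0. -/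
open MeasureTheory

/-- If an unbiased estimator of the aggregate treatment effect exists, then every
effect functional `L i` satisfies simple positivity: it vanishes on every function in
the model space that is zero `μ`-almost everywhere. -/
theorem unbiased_estimator_implies_simple_positivity
    {Ω : Type*} [MeasurableSpace Ω] (μ : Measure Ω) [IsProbabilityMeasure μ]
    (n : ℕ) (M : Fin n → Submodule ℝ (Ω → ℝ))
    (hMmeas : ∀ i, ∀ f ∈ M i, Measurable f)
    (hMsq : ∀ i, ∀ f ∈ M i, Integrable (fun ω => (f ω) ^ 2) μ)
    (L : ∀ i, (M i) →ₗ[ℝ] ℝ)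
    (T : Ω × (Fin n → ℝ) → ℝ) (hT : Measurable T)
    (hunbiased : ∀ f : (i : Fin n) → M i,
      Integrable (fun ω => T (ω, fun i => (f i : Ω → ℝ) ω)) μ ∧
      ∫ ω, T (ω, fun i => (f i : Ω → ℝ) ω) ∂μ = (1 / (n : ℝ)) * ∑ i, L i (f i)) :
    ∀ i, ∀ u : M i, ((u : Ω → ℝ) =ᵐ[μ] (0 : Ω → ℝ)) → L i u = 0 := by
  intro i u hu
  have hn : (n : ℝ) ≠ 0 := by
    have := i.pos
    positivity
  -- the tuple with u in slot i, 0 elsewhere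
  set f : (j : Fin n) → M j := fun j => if h : j = i then h ▸ u else 0 with hf
  have h1 := hunbiased f
  have h2 := hunbiased (fun _ => 0)
  have hsum : ∑ j, L j (f j) = L i u := by
    rw [Finset.sum_eq_single i]
    · simp [hf]
    · intro j _ hj
      simp [hf, hj]
    · simp
  have hae : (fun ω => T (ω, fun j => (f j : Ω → ℝ) ω))
      =ᵐ[μ] (fun ω => T (ω, fun j => ((0 : M j) : Ω → ℝ) ω)) := by
    filter_upwards [hu] with ω hω
    have hv : (fun j => (f j : Ω → ℝ) ω) = fun j => ((0 : M j) : Ω → ℝ) ω := by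
      funext j
      by_cases h : j = i
      · subst h; simpa [hf] using hω
      · simp [hf, h]
    rw [hv]
  have := integral_congr_ae hae
  rw [h1.2, h2.2] at this
  simp only [map_zero, Finset.sum_const_zero, mul_zero] at this
  rw [hsum] at this
  field_simp at this
  simpa using this
end
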